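/- The matroid M*(K5), the dual of the cycle matroid of the complete graph K5, is an even-cycle matroid with a blocking pair. -/

import Mathlib

open Set Matroid

noncomputable section

/-- Augmentation property for linear independence of columns. -/
theorem colIndep_aug {K V n : Type*} [Field K] [AddCommGroup V] [Module K V]
    [FiniteDimensional K V] [Finite n] (v : n → V) {I J : Set n}
    (hI : LinearIndependent K (fun i : I => v i)) (hJ : LinearIndependent K (fun i : J => v i))
    (hcard : I.ncard < J.ncard) :
    ∃ e ∈ J, e ∉ I ∧ LinearIndependent K (fun i : ↥(insert e I) => v i) := by
  classical
  by_contra h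
  push_neg at h
  have hspan : ∀ e ∈ J, v e ∈ Submodule.span K (v '' I) := by
    intro e he
    by_cases heI : e ∈ I
    · exact Submodule.subset_span ⟨e, heI, rfl⟩
    by_contra hsp
    exact h e he heI ((linearIndepOn_insert heI).2 ⟨hI, hsp⟩)
  have hle : Submodule.span K (v '' J) ≤ Submodule.span K (v '' I) := by
    rw [Submodule.span_le]
    rintro _ ⟨e, he, rfl⟩
    exact hspan e he
  haveI : Fintype I := (Set.toFinite I).fintype
  haveI : Fintype J := (Set.toFinite J).fintype
  have hIcard : Module.finrank K (Submodule.span K (v '' I)) = I.ncard := by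
    rw [Set.image_eq_range, finrank_span_eq_card hI, Set.ncard_eq_toFinset_card',
      Set.toFinset_card]
  have hJcard : Module.finrank K (Submodule.span K (v '' J)) = J.ncard := by
    rw [Set.image_eq_range, finrank_span_eq_card hJ, Set.ncard_eq_toFinset_card',
      Set.toFinset_card]
  have := Submodule.finrank_mono (R := K) hle
  omega

/-- The column matroid of a matrix over `GF(2)`: the matroid on the columns of `A`,
where a set of columns is independent iff it is linearly independent over `GF(2)`. -/
def colMatroid {m n : Type*} [Fintype m] [Fintype n] (A : Matrix m n (ZMod 2)) : Matroid n :=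
  (IndepMatroid.ofFinite (Set.finite_univ (α := n))
    (fun I => LinearIndependent (ZMod 2) (fun i : I => A.transpose i))
    linearIndependent_empty_type
    (fun I J hJ hIJ => hJ.comp (Set.inclusion hIJ) (Set.inclusion_injective hIJ))
    (fun I J hI hJ hc => colIndep_aug A.transpose hI hJ hc)
    (fun I _ => Set.subset_univ I)).matroid

namespace Matroid

/-- Deletion of a set of elements from a matroid. -/
def del {α : Type*} (M : Matroid α) (D : Set α) : Matroid α := M ↾ (M.E \ D)

/-- Contraction of a set of elements from a matroid, defined by duality. -/
def con {α : Type*} (M : Matroid α) (C : Set α) : Matroid α := (M✶.del C)✶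

/-- Matroid isomorphism: a bijection between ground sets preserving independence. -/
def IsoTo {α β : Type*} (M : Matroid α) (N : Matroid β) : Prop :=
  ∃ φ : α → β, Set.BijOn φ M.E N.E ∧ ∀ I ⊆ M.E, (M.Indep I ↔ N.Indep (φ '' I))

/-- `M` has a minor isomorphic to `N`. -/
def HasMinorIsoTo {α β : Type*} (M : Matroid α) (N : Matroid β) : Prop :=
  ∃ C D : Set α, ((M.con C).del D).IsoTo N

/-- A binary matroid: one isomorphic to the column matroid of a matrix over `GF(2)`. -/
def IsBinary {α : Type*} (M : Matroid α) : Prop :=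
  ∃ (k l : ℕ) (A : Matrix (Fin k) (Fin l) (ZMod 2)), M.IsoTo (colMatroid A)

/-- A simple matroid: no loops and no pair of distinct parallel elements,
i.e. every subset of the ground set of size at most two is independent. -/
def IsSimple' {α : Type*} (M : Matroid α) : Prop :=
  ∀ e ∈ M.E, ∀ f ∈ M.E, M.Indep {e, f}

/-- `N` is a simplification of `M`: `N` is a simple restriction of `M` containing
an element of every parallel class of `M`. -/
def IsSimplificationOf {α : Type*} (N M : Matroid α) : Prop :=
  ∃ S ⊆ M.E, N = M ↾ S ∧ N.IsSimple' ∧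
    ∀ e ∈ M.E, M.Indep {e} → ∃ f ∈ S, e = f ∨ ¬ M.Indep {e, f}

/-- `N` is a cosimplification of `M`: the dual of `N` is a simplification of the dual of `M`. -/
def IsCosimplificationOf {α : Type*} (N M : Matroid α) : Prop :=
  N✶.IsSimplificationOf M✶

/-- A circuit: a minimal dependent set. -/
def IsCircuitOf {α : Type*} (M : Matroid α) (C : Set α) : Prop :=
  C ⊆ M.E ∧ ¬ M.Indep C ∧ ∀ D ⊂ C, M.Indep D

end Matroid

/-- `r` is a row of `A` such that every column of `A` has at most two nonzero entries
outside row `r`. -/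
def EvenCycleRep {m n : Type*} (A : Matrix m n (ZMod 2)) (r : m) : Prop :=
  ∀ j : n, ({i : m | i ≠ r ∧ A i j ≠ 0}).ncard ≤ 2

/-- An even-cycle matroid: one isomorphic to the column matroid of a `GF(2)` matrix having
a row `r` such that every column has at most two nonzero entries outside row `r`. -/
def Matroid.IsEvenCycle {α : Type*} (M : Matroid α) : Prop :=
  ∃ (k l : ℕ) (A : Matrix (Fin k) (Fin l) (ZMod 2)) (r : Fin k),
    EvenCycleRep A r ∧ M.IsoTo (colMatroid A)

/-- Every column of `A` has at most two nonzero entries. -/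
def GraphicRep {m n : Type*} (A : Matrix m n (ZMod 2)) : Prop :=
  ∀ j : n, ({i : m | A i j ≠ 0}).ncard ≤ 2

/-- A graphic matroid: one isomorphic to the column matroid of a `GF(2)` matrix in which
every column has at most two nonzero entries. -/
def Matroid.IsGraphic {α : Type*} (M : Matroid α) : Prop :=
  ∃ (k l : ℕ) (A : Matrix (Fin k) (Fin l) (ZMod 2)),
    GraphicRep A ∧ M.IsoTo (colMatroid A)

/-- A cographic matroid: the dual of a graphic matroid. -/
def Matroid.IsCographic {α : Type*} (M : Matroid α) : Prop := M✶.IsGraphic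

/-- An even-cut matroid: one isomorphic to the column matroid of a `GF(2)` matrix `A` having a
row `r` such that the column matroid of the matrix obtained by deleting row `r` is cographic. -/
def Matroid.IsEvenCut {α : Type*} (M : Matroid α) : Prop :=
  ∃ (k l : ℕ) (A : Matrix (Fin k) (Fin l) (ZMod 2)) (r : Fin k),
    (colMatroid (A.submatrix (Subtype.val : {i : Fin k // i ≠ r} → Fin k) id)).IsCographic ∧
    M.IsoTo (colMatroid A)

/-- `r₁, r₂` are rows of `A` such that every column of `A` either has at most one nonzero entry
outside rows `r₁, r₂`, or has exactly two nonzero entries outside rows `r₁, r₂` and is zero in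
both rows `r₁` and `r₂`. -/
def BlockingPairRep {m n : Type*} (A : Matrix m n (ZMod 2)) (r₁ r₂ : m) : Prop :=
  ∀ j : n, ({i : m | i ≠ r₁ ∧ i ≠ r₂ ∧ A i j ≠ 0}).ncard ≤ 1 ∨
    (({i : m | i ≠ r₁ ∧ i ≠ r₂ ∧ A i j ≠ 0}).ncard = 2 ∧ A r₁ j = 0 ∧ A r₂ j = 0)

/-- An even-cycle matroid with a blocking pair. -/
def Matroid.IsEvenCycleBP {α : Type*} (M : Matroid α) : Prop :=
  ∃ (k l : ℕ) (A : Matrix (Fin k) (Fin l) (ZMod 2)) (r₁ r₂ : Fin k), r₁ ≠ r₂ ∧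
    BlockingPairRep A r₁ r₂ ∧ M.IsoTo (colMatroid A)

/-- `N` is an excluded minor for the class of matroids satisfying `P`. -/
def IsExcludedMinorFor {α : Type*} (N : Matroid α) (P : Matroid α → Prop) : Prop :=
  ¬ P N ∧ ∀ e ∈ N.E, P (N.del {e}) ∧ P (N.con {e})

/-- The points of the binary projective space `PG(3,2)`: nonzero vectors of `GF(2)^4`. -/
abbrev PGIdx : Type := {v : Fin 4 → ZMod 2 // v ≠ 0}

/-- The matrix whose columns are the 15 nonzero vectors of `GF(2)^4`. -/
def PGMatrix : Matrix (Fin 4) PGIdx (ZMod 2) := fun i v => v.1 i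

/-- The binary projective geometry `PG(3,2)`. -/
def PG32 : Matroid PGIdx := colMatroid PGMatrix

/-- The vertex-edge incidence matrix of a simple graph on vertex set `V` whose edges are a
set of pairs `(u, w)` with `u < w`. -/
def incMatrix {k : ℕ} (E : Type*) (val : E → Fin k × Fin k) :
    Matrix (Fin k) E (ZMod 2) :=
  fun i e => if i = (val e).1 ∨ i = (val e).2 then 1 else 0

/-- Edges of `K7` minus two adjacent edges. -/
abbrev L19Edge : Type := {p : Fin 7 × Fin 7 // p.1 < p.2 ∧ p ≠ (0, 1) ∧ p ≠ (0, 2)}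

/-- `L19`: the dual of the cycle matroid of `K7` minus two adjacent edges. -/
def L19 : Matroid L19Edge := (colMatroid (incMatrix L19Edge Subtype.val))✶

/-- The matroid `L11`. -/
def L11 : Matroid (Fin 11) :=
  colMatroid (!![1,0,0,0,0,0,1,0,1,0,1;
                 0,1,0,0,0,0,1,0,0,1,1;
                 0,0,1,0,0,0,0,1,1,1,0;
                 0,0,0,1,0,0,0,1,1,0,1;
                 0,0,0,0,1,0,0,1,0,1,1;
                 0,0,0,0,0,1,0,0,1,1,1] : Matrix (Fin 6) (Fin 11) (ZMod 2))

/-- Edges of the complete graph `K6`. -/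
abbrev K6Edge : Type := {p : Fin 6 × Fin 6 // p.1 < p.2}

/-- The cycle matroid `M(K6)`. -/
def MK6 : Matroid K6Edge := colMatroid (incMatrix K6Edge Subtype.val)

/-- Edges of `K6` minus an edge. -/
abbrev K6eEdge : Type := {p : Fin 6 × Fin 6 // p.1 < p.2 ∧ p ≠ (0, 1)}

/-- The cycle matroid `M(K6 \ e)`. -/
def MK6e : Matroid K6eEdge := colMatroid (incMatrix K6eEdge Subtype.val)

/-- Edges of the complete graph `K5`. -/
abbrev K5Edge : Type := {p : Fin 5 × Fin 5 // p.1 < p.2}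

/-- The cycle matroid `M(K5)`. -/
def MK5 : Matroid K5Edge := colMatroid (incMatrix K5Edge Subtype.val)

/-- The matroid `H12`. -/
def H12 : Matroid (Fin 12) :=
  colMatroid (!![1,0,1,0,1,0,1,0,1,0,1,0;
                 0,0,0,0,1,1,1,1,0,0,0,0;
                 0,0,0,0,1,1,0,0,1,1,0,0;
                 1,1,0,0,0,0,0,0,0,0,1,1;
                 0,0,1,1,0,0,1,1,0,0,1,1] : Matrix (Fin 5) (Fin 12) (ZMod 2))

end
noncomputable section aux
variable {m m₁ m₂ n : Type*} [Fintype m] [Fintype m₁] [Fintype m₂] [Fintype n]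

lemma colMatroid_indep_iff (A : Matrix m n (ZMod 2)) {I : Set n} :
    (colMatroid A).Indep I ↔ LinearIndependent (ZMod 2) (fun i : I => A.transpose i) := by
  simp [colMatroid, IndepMatroid.matroid_indep_iff, IndepMatroid.ofFinite]

lemma colMatroid_ground (A : Matrix m n (ZMod 2)) : (colMatroid A).E = Set.univ := by
  simp [colMatroid, IndepMatroid.ofFinite]

lemma mulVec_eq_sum_cols (A : Matrix m n (ZMod 2)) (x : n → ZMod 2) :
    A.mulVec x = ∑ j, x j • A.transpose j := by
  funext i
  simp [Matrix.mulVec, dotProduct, Finset.sum_apply, Matrix.transpose_apply, mul_comm]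

lemma indep_iff_forall_support (A : Matrix m n (ZMod 2)) (I : Set n) :
    LinearIndependent (ZMod 2) (fun i : I => A.transpose i) ↔
      ∀ x : n → ZMod 2, A.mulVec x = 0 → (∀ j, x j ≠ 0 → j ∈ I) → x = 0 := by
  classical
  haveI : Fintype I := (Set.toFinite I).fintype
  rw [Fintype.linearIndependent_iff]
  constructor
  · intro h x hx hsupp
    have hsum : ∑ i : I, x i • A.transpose i = 0 := by
      rw [← hx, mulVec_eq_sum_cols]
      rw [← Finset.sum_subset (Finset.subset_univ I.toFinset)
        (by intro j _ hj; simp only [Set.mem_toFinset] at hj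
            have : x j = 0 := by_contra fun h' => hj (hsupp j h')
            simp [this])]
      exact Finset.sum_set_coe (f := fun j => x j • A.transpose j) I
    have := h (fun i => x i) hsum
    funext j
    by_cases hj : j ∈ I
    · exact this ⟨j, hj⟩
    · by_contra h'
      exact hj (hsupp j h')
  · intro h g hg i
    set x : n → ZMod 2 := fun j => if hj : j ∈ I then g ⟨j, hj⟩ else 0 with hxdef
    have hx : A.mulVec x = 0 := by
      rw [mulVec_eq_sum_cols, ← hg]
      rw [← Finset.sum_subset (Finset.subset_univ I.toFinset)
        (by intro j _ hj; simp only [Set.mem_toFinset] at hj; simp [hxdef, hj])]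
      rw [← Finset.sum_set_coe (f := fun j => x j • A.transpose j) I]
      apply Finset.sum_congr rfl
      intro i _
      simp [hxdef, i.2]
    have hx0 := h x hx (by
      intro j hjne
      by_contra hj
      exact hjne (by simp [hxdef, hj]))
    have := congrFun hx0 i
    simpa [hxdef, i.2] using this

lemma span_le_ker (A : Matrix m₁ n (ZMod 2)) (B : Matrix m₂ n (ZMod 2))
    (hAB : A * B.transpose = 0) :
    Submodule.span (ZMod 2) (Set.range B) ≤ LinearMap.ker A.mulVecLin := by
  rw [Submodule.span_le]
  rintro _ ⟨i, rfl⟩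
  simp only [SetLike.mem_coe, LinearMap.mem_ker, Matrix.mulVecLin_apply]
  funext k
  have := congrFun (congrFun hAB k) i
  simpa [Matrix.mul_apply, Matrix.mulVec, dotProduct] using this

lemma ker_subset_span (A : Matrix m₁ n (ZMod 2)) (B : Matrix m₂ n (ZMod 2))
    (hA : LinearIndependent (ZMod 2) A) (hB : LinearIndependent (ZMod 2) B)
    (hAB : A * B.transpose = 0)
    (hcard : Fintype.card m₁ + Fintype.card m₂ = Fintype.card n) :
    ∀ x : n → ZMod 2, A.mulVec x = 0 → x ∈ Submodule.span (ZMod 2) (Set.range B) := by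
  have hle := span_le_ker A B hAB
  have hrankA : A.rank = Fintype.card m₁ := by
    rw [← Matrix.rank_transpose, Matrix.rank_eq_finrank_span_cols]
    exact finrank_span_eq_card hA
  have hrn := LinearMap.finrank_range_add_finrank_ker A.mulVecLin
  rw [Module.finrank_pi] at hrn
  have hrange : Module.finrank (ZMod 2) (LinearMap.range A.mulVecLin) = A.rank := rfl
  have hspan : Module.finrank (ZMod 2) (Submodule.span (ZMod 2) (Set.range B))
      = Fintype.card m₂ := finrank_span_eq_card hB
  have heq : Submodule.span (ZMod 2) (Set.range B) = LinearMap.ker A.mulVecLin := by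
    apply Submodule.eq_of_le_of_finrank_le hle
    rw [hspan]
    omega
  intro x hx
  rw [heq]
  simpa [LinearMap.mem_ker, Matrix.mulVecLin_apply]

lemma baseSwap (A : Matrix m₁ n (ZMod 2)) (B : Matrix m₂ n (ZMod 2))
    (hAB : A * B.transpose = 0)
    (hker : ∀ x : n → ZMod 2, A.mulVec x = 0 → x ∈ Submodule.span (ZMod 2) (Set.range B))
    {X : Set n} (hX : (colMatroid B).IsBase X) :
    (colMatroid A).IsBase (Set.univ \ X) := by
  classical
  rw [Matroid.isBase_iff_maximal_indep] at hX ⊢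
  obtain ⟨hXi, hXmax⟩ := hX
  rw [colMatroid_indep_iff] at hXi
  -- (a) columns of B over X span everything
  have hspans : ∀ j : n, B.transpose j ∈ Submodule.span (ZMod 2) (B.transpose '' X) := by
    intro j
    by_cases hj : j ∈ X
    · exact Submodule.subset_span (Set.mem_image_of_mem _ hj)
    · by_contra hsp
      have hins : LinearIndependent (ZMod 2) (fun i : ↥(insert j X) => B.transpose i) :=
        (linearIndepOn_insert hj).2 ⟨hXi, hsp⟩
      have := hXmax ((colMatroid_indep_iff B).2 hins) (Set.subset_insert j X)
      exact hj (this (Set.mem_insert j X))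
  -- dot functional helper
  have mkF : ∀ c : m₂ → ZMod 2, ∃ f : (m₂ → ZMod 2) →ₗ[ZMod 2] ZMod 2,
      ∀ v, f v = ∑ i, c i * v i := by
    intro c
    refine ⟨{ toFun := fun v => ∑ i, c i * v i, map_add' := ?_, map_smul' := ?_ }, fun v => rfl⟩
    · intro v w; simp [mul_add, Finset.sum_add_distrib]
    · intro r v; simp [Finset.mul_sum, mul_left_comm]
  constructor
  · -- independence of complement
    rw [colMatroid_indep_iff, indep_iff_forall_support]
    intro x hx hsupp
    obtain ⟨c, hc⟩ := Submodule.mem_span_range_iff_exists_fun (ZMod 2) |>.1 (hker x hx)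
    obtain ⟨f, hf⟩ := mkF c
    have hxf : ∀ j, x j = f (B.transpose j) := by
      intro j
      rw [hf, ← hc]
      simp [Finset.sum_apply]
    have hfX : ∀ v ∈ Submodule.span (ZMod 2) (B.transpose '' X), f v = 0 := by
      intro v hv
      have hle : Submodule.span (ZMod 2) (B.transpose '' X) ≤ LinearMap.ker f := by
        rw [Submodule.span_le]
        rintro _ ⟨j, hjX, rfl⟩
        have hxj : x j = 0 := by
          by_contra h'
          exact ((hsupp j h').2) hjX
        simp only [SetLike.mem_coe, LinearMap.mem_ker]
        rw [← hxf j]; exact hxj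
      exact hle hv
    funext j
    rw [hxf j]
    exact hfX _ (hspans j)
  · -- maximality
    intro I hI hsub
    intro e heI
    by_contra heX'
    have heX : e ∈ X := by
      by_contra h
      exact heX' ⟨trivial, h⟩
    have hins : (colMatroid A).Indep (insert e (Set.univ \ X)) :=
      hI.subset (Set.insert_subset heI hsub)
    rw [colMatroid_indep_iff, indep_iff_forall_support] at hins
    -- B.transpose e not in span of other X columns
    have hXrw : insert e (X \ {e}) = X := by
      rw [Set.insert_diff_singleton, Set.insert_eq_self.2 heX]
    have hXi' : LinearIndependent (ZMod 2) (fun i : ↥(insert e (X \ {e})) => B.transpose i) := by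
      rw [hXrw]; exact hXi
    have hnmem : B.transpose e ∉ Submodule.span (ZMod 2) (B.transpose '' (X \ {e})) :=
      ((linearIndepOn_insert (by simp)).1 hXi').2
    obtain ⟨f, hfe, hfmap⟩ := Submodule.exists_dual_map_eq_bot_of_notMem hnmem inferInstance
    set x : n → ZMod 2 := fun j => f (B.transpose j) with hxdef
    have hxmem : x ∈ Submodule.span (ZMod 2) (Set.range B) := by
      have hxeq : x = ∑ i, f (fun j => if i = j then 1 else 0) • B i := by
        funext j
        have : B.transpose j = ∑ i, B.transpose j i • fun j' => if i = j' then (1 : ZMod 2) else 0 :=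
          pi_eq_sum_univ _
        rw [hxdef]
        simp only
        rw [this, map_sum]
        simp [Finset.sum_apply, map_smul, mul_comm, Matrix.transpose_apply]
      rw [hxeq]
      exact Submodule.sum_mem _ fun i _ =>
        Submodule.smul_mem _ _ (Submodule.subset_span ⟨i, rfl⟩)
    have hx0 : A.mulVec x = 0 := by
      have := span_le_ker A B hAB hxmem
      simpa [LinearMap.mem_ker, Matrix.mulVecLin_apply] using this
    have hxzero : x = 0 := by
      apply hins x hx0
      intro j hj
      by_contra hjmem
      have hjX : j ∈ X \ {e} := by
        simp only [Set.mem_insert_iff, not_or, Set.mem_diff, Set.mem_univ, true_and,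
          not_not] at hjmem
        exact ⟨hjmem.2, hjmem.1⟩
      apply hj
      have : f (B.transpose j) = 0 := by
        have : f (B.transpose j) ∈ (⊥ : Submodule (ZMod 2) (ZMod 2)) := by
          rw [← hfmap]
          exact Submodule.mem_map_of_mem
            (Submodule.subset_span (Set.mem_image_of_mem _ hjX))
        exact (Submodule.mem_bot _).1 this
      simpa [hxdef] using this
    exact hfe (by simpa [hxdef] using congrFun hxzero e)

theorem colMatroid_dual (A : Matrix m₁ n (ZMod 2)) (B : Matrix m₂ n (ZMod 2))
    (hA : LinearIndependent (ZMod 2) A) (hB : LinearIndependent (ZMod 2) B)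
    (hAB : A * B.transpose = 0)
    (hcard : Fintype.card m₁ + Fintype.card m₂ = Fintype.card n) :
    (colMatroid A)✶ = colMatroid B := by
  have hBA : B * A.transpose = 0 := by
    have := congrArg Matrix.transpose hAB
    rwa [Matrix.transpose_mul, Matrix.transpose_transpose, Matrix.transpose_zero] at this
  have hkerA := ker_subset_span A B hA hB hAB hcard
  have hkerB := ker_subset_span B A hB hA hBA (by omega)
  apply Matroid.ext_isBase
  · rw [Matroid.dual_ground, colMatroid_ground, colMatroid_ground]
  intro X hXE
  rw [Matroid.dual_isBase_iff (by rw [colMatroid_ground]; exact Set.subset_univ X)]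
  rw [colMatroid_ground]
  constructor
  · intro h
    have := baseSwap B A hBA hkerB h
    rwa [Set.diff_diff_cancel_left (Set.subset_univ X)] at this
  · intro h
    exact baseSwap A B hAB hkerA h


namespace MK5Aux

def K5A : Matrix (Fin 4) K5Edge (ZMod 2) :=
  (incMatrix K5Edge Subtype.val).submatrix Fin.castSucc id

def Lmap : (Fin 4 → ZMod 2) →ₗ[ZMod 2] (Fin 5 → ZMod 2) where
  toFun x := fun j => if h : (j : ℕ) < 4 then x ⟨j, h⟩ else ∑ i, x i
  map_add' x y := by
    funext j
    by_cases h : (j : ℕ) < 4 <;> simp [h, Finset.sum_add_distrib]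
  map_smul' r x := by
    funext j
    by_cases h : (j : ℕ) < 4 <;> simp [h, Finset.mul_sum]

lemma Lmap_ker : LinearMap.ker Lmap = ⊥ := by
  rw [LinearMap.ker_eq_bot']
  intro x hx
  funext i
  have := congrFun hx (Fin.castSucc i)
  simpa [Lmap, i.isLt] using this

lemma hcol : ∀ e : K5Edge, (incMatrix K5Edge Subtype.val).transpose e
    = Lmap (K5A.transpose e) := by
  unfold K5A Matrix.transpose Matrix.submatrix incMatrix Matrix.of; decide

lemma MK5_eq : MK5 = colMatroid K5A := by
  refine Matroid.ext_indep ?_ ?_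
  · show (colMatroid (incMatrix K5Edge Subtype.val)).E = (colMatroid K5A).E
    rw [colMatroid_ground, colMatroid_ground]
  · intro I _
    show (colMatroid (incMatrix K5Edge Subtype.val)).Indep I ↔ _
    rw [colMatroid_indep_iff, colMatroid_indep_iff]
    have heq : (fun i : I => (incMatrix K5Edge Subtype.val).transpose i)
        = ⇑Lmap ∘ (fun i : I => K5A.transpose i) := by
      funext i; exact hcol i
    rw [heq, LinearMap.linearIndependent_iff Lmap Lmap_ker]

def BMat : Matrix (Fin 6) (Fin 10) (ZMod 2) :=
  !![0,0,0,0,1,1,0,1,0,0;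
     0,0,0,0,1,0,1,0,1,0;
     1,1,0,0,1,0,0,0,0,0;
     1,0,1,0,0,1,0,0,0,0;
     0,1,0,1,0,0,0,0,1,0;
     0,0,1,1,0,0,0,0,0,1]

def edgeIdx (e : K5Edge) : Fin 10 :=
  if e.1 = (0,1) then 0 else if e.1 = (0,2) then 1 else if e.1 = (0,3) then 2
  else if e.1 = (0,4) then 3 else if e.1 = (1,2) then 4 else if e.1 = (1,3) then 5
  else if e.1 = (1,4) then 6 else if e.1 = (2,3) then 7 else if e.1 = (2,4) then 8 else 9

def BK : Matrix (Fin 6) K5Edge (ZMod 2) := fun i e => BMat i (edgeIdx e)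

lemma hAind : LinearIndependent (ZMod 2) K5A := by
  apply Fintype.linearIndependent_iff.2
  decide

lemma hBind : LinearIndependent (ZMod 2) BK := by
  apply Fintype.linearIndependent_iff.2
  decide

lemma horth : K5A * BK.transpose = 0 := by decide

lemma hcard : Fintype.card (Fin 4) + Fintype.card (Fin 6) = Fintype.card K5Edge := by decide

lemma hdual : MK5✶ = colMatroid BK := by
  rw [MK5_eq]
  exact colMatroid_dual K5A BK hAind hBind horth hcard

lemma hbij : Function.Bijective edgeIdx := by decide

lemma bp : BlockingPairRep BMat 0 1 := by
  intro j
  have hset : {i : Fin 6 | i ≠ 0 ∧ i ≠ 1 ∧ BMat i j ≠ 0}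
      = ↑(Finset.univ.filter (fun i : Fin 6 => i ≠ 0 ∧ i ≠ 1 ∧ BMat i j ≠ 0)) := by
    ext i; simp
  rw [hset, Set.ncard_coe_finset]
  clear hset
  revert j
  decide

end MK5Aux

/-- `M✶(K5)` is an even-cycle matroid with a blocking pair. -/
theorem MK5_dual_evenCycleBP : (MK5✶).IsEvenCycleBP := by
  refine ⟨6, 10, MK5Aux.BMat, 0, 1, by decide, MK5Aux.bp, MK5Aux.edgeIdx, ?_, ?_⟩
  · rw [Matroid.dual_ground, colMatroid_ground]
    show Set.BijOn MK5Aux.edgeIdx (colMatroid (incMatrix K5Edge Subtype.val)).E Set.univ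
    rw [colMatroid_ground]
    exact MK5Aux.hbij.bijOn_univ
  · intro I hI
    rw [MK5Aux.hdual, colMatroid_indep_iff, colMatroid_indep_iff]
    rw [← linearIndependent_equiv (Equiv.Set.image MK5Aux.edgeIdx I MK5Aux.hbij.injective)]
    have heq : ((fun i : ↥(MK5Aux.edgeIdx '' I) => MK5Aux.BMat.transpose i)
        ∘ ⇑(Equiv.Set.image MK5Aux.edgeIdx I MK5Aux.hbij.injective))
        = fun i : I => MK5Aux.BK.transpose i := by
      funext i
      simp [Equiv.Set.image, Equiv.Set.imageOfInjOn]
      rfl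
    rw [heq]

end aux
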